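/- Let X = a·M_{1⊗1} + M_{p⊗i} + M_{q⊗j} + M_{r⊗k} be a symmetric 4×4 real matrix, where a ∈ ℝ and p,q,r are pure quaternions (identified with vectors in ℝ³). Then X is symplectic if and only if a q = r × p, p·q = 0 = r·q, and a² − p·p + q·q − r·r = 1. If a ≠ 0, the conditions p·q = 0 = r·q follow from a q = r × p. -/

import Mathlib

open Matrix Quaternion

noncomputable def quatBasis : Module.Basis (Fin 4) ℝ (Quaternion ℝ) :=
  Module.Basis.ofEquivFun
    (QuaternionAlgebra.linearEquivTuple (c₁ := (-1 : ℝ)) (c₂ := (0 : ℝ)) (c₃ := (-1 : ℝ)))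

/-- The 4×4 real matrix of the ℝ-linear map `x ↦ p * x * star q` on ℍ ≅ ℝ⁴. -/
noncomputable def quatM (p q : Quaternion ℝ) : Matrix (Fin 4) (Fin 4) ℝ :=
  LinearMap.toMatrix quatBasis quatBasis
    ((LinearMap.mulLeft ℝ p).comp (LinearMap.mulRight ℝ (star q)))

def qi : Quaternion ℝ := ⟨0, 1, 0, 0⟩
def qj : Quaternion ℝ := ⟨0, 0, 1, 0⟩
def qk : Quaternion ℝ := ⟨0, 0, 0, 1⟩

/-- Dot product of the imaginary (vector) parts of two quaternions. -/
def qdot (x y : Quaternion ℝ) : ℝ := x.imI * y.imI + x.imJ * y.imJ + x.imK * y.imK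

/-- Cross product of the imaginary (vector) parts, as a pure quaternion. -/
def qcross (x y : Quaternion ℝ) : Quaternion ℝ :=
  ⟨0, x.imJ * y.imK - x.imK * y.imJ, x.imK * y.imI - x.imI * y.imK,
    x.imI * y.imJ - x.imJ * y.imI⟩
lemma quatBasis_repr (x : Quaternion ℝ) (i : Fin 4) :
    quatBasis.repr x i = ![x.re, x.imI, x.imJ, x.imK] i := by
  rfl

lemma quatBasis_apply (j : Fin 4) :
    quatBasis j = ![1, qi, qj, qk] j := by
  rw [quatBasis]
  erw [Module.Basis.coe_ofEquivFun]
  fin_cases j <;>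
    · ext <;> simp [QuaternionAlgebra.linearEquivTuple, QuaternionAlgebra.equivTuple, qi, qj, qk] <;> rfl

lemma quatM_apply (p q : Quaternion ℝ) (i j : Fin 4) :
    quatM p q i j = quatBasis.repr (p * (![1, qi, qj, qk] j) * star q) i := by
  rw [quatM, LinearMap.toMatrix_apply, ← quatBasis_apply, LinearMap.comp_apply,
    LinearMap.mulRight_apply, LinearMap.mulLeft_apply, mul_assoc]

lemma quatM_eq (p q : Quaternion ℝ) : quatM p q = !![
  p.imI* q.imI + p.imJ* q.imJ + p.imK* q.imK + p.re* q.re, -p.imI* q.re - p.imJ* q.imK + p.imK* q.imJ + p.re* q.imI, p.imI* q.imK - p.imJ* q.re - p.imK* q.imI + p.re* q.imJ, -p.imI* q.imJ + p.imJ* q.imI - p.imK* q.re + p.re* q.imK;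
  p.imI* q.re - p.imJ* q.imK + p.imK* q.imJ - p.re* q.imI, p.imI* q.imI - p.imJ* q.imJ - p.imK* q.imK + p.re* q.re, p.imI* q.imJ + p.imJ* q.imI - p.imK* q.re - p.re* q.imK, p.imI* q.imK + p.imJ* q.re + p.imK* q.imI + p.re* q.imJ;
  p.imI* q.imK + p.imJ* q.re - p.imK* q.imI - p.re* q.imJ, p.imI* q.imJ + p.imJ* q.imI + p.imK* q.re + p.re* q.imK, -p.imI* q.imI + p.imJ* q.imJ - p.imK* q.imK + p.re* q.re, -p.imI* q.re + p.imJ* q.imK + p.imK* q.imJ - p.re* q.imI;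
  -p.imI* q.imJ + p.imJ* q.imI + p.imK* q.re - p.re* q.imK, p.imI* q.imK - p.imJ* q.re + p.imK* q.imI - p.re* q.imJ, p.imI* q.re + p.imJ* q.imK + p.imK* q.imJ + p.re* q.imI, -p.imI* q.imI - p.imJ* q.imJ + p.imK* q.imK + p.re* q.re] := by
  ext i j
  rw [quatM_apply, quatBasis_repr]
  fin_cases i <;> fin_cases j <;>
    simp [Quaternion.ext_iff, Quaternion.re_mul, Quaternion.imI_mul,
      Quaternion.imJ_mul, Quaternion.imK_mul] <;> obtain ⟨p0, p1, p2, p3⟩ := p <;>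
    obtain ⟨q0, q1, q2, q3⟩ := q <;> simp [qi, qj, qk] <;> ring
set_option maxHeartbeats 4000000 in
theorem stmt_13 (a : ℝ) (p q r : Quaternion ℝ)
    (hp : p.re = 0) (hq : q.re = 0) (hr : r.re = 0)
    (X : Matrix (Fin 4) (Fin 4) ℝ)
    (hXdef : X = a • quatM 1 1 + quatM p qi + quatM q qj + quatM r qk) :
    (Xᵀ * quatM 1 qj * X = quatM 1 qj ↔
      a • q = qcross r p ∧ qdot p q = 0 ∧ qdot r q = 0 ∧
        a ^ 2 - qdot p p + qdot q q - qdot r r = 1) ∧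
    (a ≠ 0 → a • q = qcross r p → qdot p q = 0 ∧ qdot r q = 0) := by
  obtain ⟨p0, p1, p2, p3⟩ := p
  obtain ⟨q0, q1, q2, q3⟩ := q
  obtain ⟨r0, r1, r2, r3⟩ := r
  simp only [QuaternionAlgebra.mk.injEq] at *
  subst hp hq hr
  have hJ : quatM 1 qj = !![0,0,1,0; 0,0,0,1; -1,0,0,0; 0,-1,0,0] := by
    rw [quatM_eq]
    norm_num [qj]
  have hX : X = !![a + p1 + q2 + r3, q3 - r2, -p3 + r1, p2 - q1;
      q3 - r2, a + p1 - q2 - r3, p2 + q1, p3 + r1;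
      -p3 + r1, p2 + q1, a - p1 + q2 - r3, q3 + r2;
      p2 - q1, p3 + r1, q3 + r2, a - p1 - q2 + r3] := by
    erw [hXdef, quatM_eq, quatM_eq, quatM_eq, quatM_eq]
    ext i j
    fin_cases i <;> fin_cases j <;>
      simp [qi, qj, qk, Matrix.add_apply, Matrix.smul_apply] <;> ring
  have hXT : Xᵀ = !![a + p1 + q2 + r3, q3 - r2, -p3 + r1, p2 - q1;
      q3 - r2, a + p1 - q2 - r3, p2 + q1, p3 + r1;
      -p3 + r1, p2 + q1, a - p1 + q2 - r3, q3 + r2;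
      p2 - q1, p3 + r1, q3 + r2, a - p1 - q2 + r3] := by
    rw [hX]
    ext i j
    fin_cases i <;> fin_cases j <;> simp [Matrix.transpose_apply]
  have hE : Xᵀ * quatM 1 qj * X = !![
      0, 2*a*q1 + 2*p1*q1 + 2*p2*q2 + 2*p2*r3 + 2*p3*q3 - 2*p3*r2, a*a + 2*a*q2 - p1*p1 - 2*p1*r3 - p2*p2 - p3*p3 + 2*p3*r1 + q1*q1 + q2*q2 + q3*q3 - r1*r1 - r2*r2 - r3*r3, 2*a*q3 + 2*p1*r2 - 2*p2*r1 + 2*q1*r1 + 2*q2*r2 + 2*q3*r3;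
      -2*a*q1 - 2*p1*q1 - 2*p2*q2 - 2*p2*r3 - 2*p3*q3 + 2*p3*r2, 0, 2*a*q3 + 2*p1*r2 - 2*p2*r1 - 2*q1*r1 - 2*q2*r2 - 2*q3*r3, a*a - 2*a*q2 - p1*p1 + 2*p1*r3 - p2*p2 - p3*p3 - 2*p3*r1 + q1*q1 + q2*q2 + q3*q3 - r1*r1 - r2*r2 - r3*r3;
      -a*a - 2*a*q2 + p1*p1 + 2*p1*r3 + p2*p2 + p3*p3 - 2*p3*r1 - q1*q1 - q2*q2 - q3*q3 + r1*r1 + r2*r2 + r3*r3, -2*a*q3 - 2*p1*r2 + 2*p2*r1 + 2*q1*r1 + 2*q2*r2 + 2*q3*r3, 0, 2*a*q1 - 2*p1*q1 - 2*p2*q2 + 2*p2*r3 - 2*p3*q3 - 2*p3*r2;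
      -2*a*q3 - 2*p1*r2 + 2*p2*r1 - 2*q1*r1 - 2*q2*r2 - 2*q3*r3, -a*a + 2*a*q2 + p1*p1 - 2*p1*r3 + p2*p2 + p3*p3 + 2*p3*r1 - q1*q1 - q2*q2 - q3*q3 + r1*r1 + r2*r2 + r3*r3, -2*a*q1 + 2*p1*q1 + 2*p2*q2 - 2*p2*r3 + 2*p3*q3 + 2*p3*r2, 0] := by
    rw [hXT, hX, hJ]
    ext i j
    fin_cases i <;> fin_cases j <;>
      simp [Matrix.mul_apply, Fin.sum_univ_four] <;> ring
  have hsmul : a • (⟨0, q1, q2, q3⟩ : Quaternion ℝ) = ⟨0, a*q1, a*q2, a*q3⟩ := by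
    ext <;> simp [QuaternionAlgebra.re_smul, mul_comm]
  have hcross : qcross ⟨0, r1, r2, r3⟩ ⟨0, p1, p2, p3⟩ =
      ⟨0, r2*p3 - r3*p2, r3*p1 - r1*p3, r1*p2 - r2*p1⟩ := rfl
  have hcond : (a • (⟨0, q1, q2, q3⟩ : Quaternion ℝ) = qcross ⟨0, r1, r2, r3⟩ ⟨0, p1, p2, p3⟩)
      ↔ (a*q1 = r2*p3 - r3*p2 ∧ a*q2 = r3*p1 - r1*p3 ∧ a*q3 = r1*p2 - r2*p1) := by
    rw [hsmul, hcross, QuaternionAlgebra.mk.injEq]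
    tauto
  simp only [qdot]
  erw [hcond]
  constructor
  · rw [hE, hJ]
    constructor
    · intro h
      have key : ∀ i j, (!![
        (0:ℝ), 2*a*q1 + 2*p1*q1 + 2*p2*q2 + 2*p2*r3 + 2*p3*q3 - 2*p3*r2, a*a + 2*a*q2 - p1*p1 - 2*p1*r3 - p2*p2 - p3*p3 + 2*p3*r1 + q1*q1 + q2*q2 + q3*q3 - r1*r1 - r2*r2 - r3*r3, 2*a*q3 + 2*p1*r2 - 2*p2*r1 + 2*q1*r1 + 2*q2*r2 + 2*q3*r3;
        -2*a*q1 - 2*p1*q1 - 2*p2*q2 - 2*p2*r3 - 2*p3*q3 + 2*p3*r2, 0, 2*a*q3 + 2*p1*r2 - 2*p2*r1 - 2*q1*r1 - 2*q2*r2 - 2*q3*r3, a*a - 2*a*q2 - p1*p1 + 2*p1*r3 - p2*p2 - p3*p3 - 2*p3*r1 + q1*q1 + q2*q2 + q3*q3 - r1*r1 - r2*r2 - r3*r3;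
        -a*a - 2*a*q2 + p1*p1 + 2*p1*r3 + p2*p2 + p3*p3 - 2*p3*r1 - q1*q1 - q2*q2 - q3*q3 + r1*r1 + r2*r2 + r3*r3, -2*a*q3 - 2*p1*r2 + 2*p2*r1 + 2*q1*r1 + 2*q2*r2 + 2*q3*r3, 0, 2*a*q1 - 2*p1*q1 - 2*p2*q2 + 2*p2*r3 - 2*p3*q3 - 2*p3*r2;
        -2*a*q3 - 2*p1*r2 + 2*p2*r1 - 2*q1*r1 - 2*q2*r2 - 2*q3*r3, -a*a + 2*a*q2 + p1*p1 - 2*p1*r3 + p2*p2 + p3*p3 + 2*p3*r1 - q1*q1 - q2*q2 - q3*q3 + r1*r1 + r2*r2 + r3*r3, -2*a*q1 + 2*p1*q1 + 2*p2*q2 - 2*p2*r3 + 2*p3*q3 + 2*p3*r2, 0]) i j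
          = (!![(0:ℝ),0,1,0; 0,0,0,1; -1,0,0,0; 0,-1,0,0]) i j := fun i j => by rw [h]
      have h01 := key 0 1
      have h02 := key 0 2
      have h03 := key 0 3
      have h12 := key 1 2
      have h13 := key 1 3
      have h23 := key 2 3
      simp at h01 h02 h03 h12 h13 h23
      refine ⟨⟨by linarith, by linarith, by linarith⟩, by linarith, by linarith, by nlinarith⟩
    · rintro ⟨⟨e1, e2, e3⟩, hpq, hrq, h4⟩
      ext i j
      fin_cases i <;> fin_cases j <;>
          simp [Matrix.vecHead, Matrix.vecTail] <;>
        first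
          | linear_combination (2:ℝ)*e1 + 2*hpq
          | linear_combination (-2:ℝ)*e1 - 2*hpq
          | linear_combination (2:ℝ)*e1 - 2*hpq
          | linear_combination (-2:ℝ)*e1 + 2*hpq
          | linear_combination (2:ℝ)*e2 + h4
          | linear_combination (-2:ℝ)*e2 - h4
          | linear_combination (2:ℝ)*e2 - h4
          | linear_combination (-2:ℝ)*e2 + h4
          | linear_combination (2:ℝ)*e3 + 2*hrq
          | linear_combination (-2:ℝ)*e3 - 2*hrq
          | linear_combination (2:ℝ)*e3 - 2*hrq
          | linear_combination (-2:ℝ)*e3 + 2*hrq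
  · rintro ha ⟨e1, e2, e3⟩
    constructor
    · have h1 : a * (p1*q1 + p2*q2 + p3*q3) = a * 0 := by
        linear_combination p1*e1 + p2*e2 + p3*e3
      simpa using mul_left_cancel₀ ha h1
    · have h2 : a * (r1*q1 + r2*q2 + r3*q3) = a * 0 := by
        linear_combination r1*e1 + r2*e2 + r3*e3
      simpa using mul_left_cancel₀ ha h2
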